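/- arXiv:2505.07555 — 5 statements merged into one kernel-verified Lean document; each statement's English description precedes it below -/
import Mathlib

section
/- Let N ≥ 1, let h : Fin N → ℝ be strictly positive channel gains, let σ² > 0 be the noise power, let P_f > 0 be the fixed circuit power, and let Pmax : Fin N → ℝ be strictly positive power limits. Define the energy efficiency η(P) = log₂(∑ₙ Pₙ hₙ + σ²) / (P_f + ∑ₙ Pₙ) on the box B = {P : ∀ n, 0 ≤ Pₙ ≤ Pmaxₙ}. Suppose P* ∈ B maximizes η over B. Then for all indices n and i, if hₙ < hᵢ and P*ᵢ < Pmaxᵢ, then P*ₙ = 0. (Paper's Theorem 1: to maximize EE, a user should not transmit if there exists another user with a strictly better channel whose optimal transmit power is strictly below its maximum.) -/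
/-- Paper's Theorem 1: at an EE-maximizing power allocation, a user does not
transmit if another user with a strictly better channel transmits strictly
below its maximum power. -/
theorem ee_optimal_weaker_user_silent
    (N : ℕ) (hN : 1 ≤ N)
    (h : Fin N → ℝ) (hpos : ∀ n, 0 < h n)
    (σ2 : ℝ) (hσ2 : 0 < σ2)
    (Pf : ℝ) (hPf : 0 < Pf)
    (Pmax : Fin N → ℝ) (hPmax : ∀ n, 0 < Pmax n)
    (η : (Fin N → ℝ) → ℝ)
    (hη : ∀ P, η P = Real.logb 2 (∑ n, P n * h n + σ2) / (Pf + ∑ n, P n))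
    (Pstar : Fin N → ℝ)
    (hPstarB : ∀ n, 0 ≤ Pstar n ∧ Pstar n ≤ Pmax n)
    (hopt : ∀ P : Fin N → ℝ, (∀ n, 0 ≤ P n ∧ P n ≤ Pmax n) → η P ≤ η Pstar) :
    ∀ n i : Fin N, h n < h i → Pstar i < Pmax i → Pstar n = 0 := by
  intro n i hni hPi
  by_contra hne
  have hn0 : 0 < Pstar n := lt_of_le_of_ne (hPstarB n).1 (Ne.symm hne)
  have hnei : n ≠ i := fun e => lt_irrefl _ (e ▸ hni)
  set δ : ℝ := min (Pstar n) (Pmax i - Pstar i) with hδdef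
  have hδpos : 0 < δ := lt_min hn0 (sub_pos.mpr hPi)
  have hδ1 : δ ≤ Pstar n := min_le_left _ _
  have hδ2 : δ ≤ Pmax i - Pstar i := min_le_right _ _
  set P' : Fin N → ℝ :=
    fun j => Pstar j + δ * ((if j = i then (1:ℝ) else 0) - (if j = n then 1 else 0)) with hP'
  have hP'B : ∀ j, 0 ≤ P' j ∧ P' j ≤ Pmax j := by
    intro j
    by_cases hji : j = i
    · subst hji
      have : P' j = Pstar j + δ := by simp [hP', Ne.symm hnei]
      rw [this]
      constructor
      · linarith [(hPstarB j).1]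
      · linarith
    · by_cases hjn : j = n
      · subst hjn
        have : P' j = Pstar j - δ := by simp [hP', hnei]; ring
        rw [this]
        constructor
        · linarith
        · linarith [(hPstarB j).2]
      · have : P' j = Pstar j := by simp [hP', hji, hjn]
        rw [this]
        exact hPstarB j
  have hsum1 : ∑ j, P' j = ∑ j, Pstar j := by
    simp [hP', Finset.sum_add_distrib, mul_sub, Finset.sum_sub_distrib,
      mul_ite, Finset.sum_ite_eq', mul_one, mul_zero]
  have hterm : ∀ j, P' j * h j =
      Pstar j * h j + (δ * (if j = i then h j else 0) - δ * (if j = n then h j else 0)) := by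
    intro j
    by_cases hji : j = i
    · subst hji; simp [hP', hnei.symm]; ring
    · by_cases hjn : j = n
      · subst hjn; simp [hP', hnei]; ring
      · simp [hP', hji, hjn]
  have hsum2 : ∑ j, P' j * h j = ∑ j, Pstar j * h j + δ * (h i - h n) := by
    rw [Finset.sum_congr rfl (fun j _ => hterm j), Finset.sum_add_distrib,
      Finset.sum_sub_distrib, ← Finset.mul_sum, ← Finset.mul_sum]
    simp [Finset.sum_ite_eq', mul_sub]
  have hS0 : 0 ≤ ∑ j, Pstar j * h j :=
    Finset.sum_nonneg fun j _ => mul_nonneg (hPstarB j).1 (hpos j).le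
  have hSsum0 : 0 ≤ ∑ j, Pstar j := Finset.sum_nonneg fun j _ => (hPstarB j).1
  have hD : 0 < Pf + ∑ j, Pstar j := by linarith
  have harg : (0:ℝ) < ∑ j, Pstar j * h j + σ2 := by linarith
  have hlt : ∑ j, Pstar j * h j + σ2 < ∑ j, P' j * h j + σ2 := by
    rw [hsum2]
    nlinarith [hδpos, sub_pos.mpr hni]
  have hlog : Real.logb 2 (∑ j, Pstar j * h j + σ2) < Real.logb 2 (∑ j, P' j * h j + σ2) :=
    Real.logb_lt_logb one_lt_two harg hlt
  have : η Pstar < η P' := by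
    rw [hη, hη, hsum1]
    exact div_lt_div_of_pos_right hlog hD
  exact absurd (hopt P' hP'B) (not_le.mpr this)
end

section
/- Let N ≥ 1, h : Fin N → ℝ strictly positive, σ² > 0, P_f > 0, Pmax : Fin N → ℝ strictly positive, and define η(P) = log₂(∑ₙ Pₙ hₙ + σ²) / (P_f + ∑ₙ Pₙ). Let P lie in the box B = {P : ∀ n, 0 ≤ Pₙ ≤ Pmaxₙ}, and let n ≠ i be indices with hₙ < hᵢ, Pₙ > 0, and Pᵢ < Pmaxᵢ. For any Δ with 0 < Δ ≤ min(Pₙ, Pmaxᵢ − Pᵢ), define P' by P'ₙ = Pₙ − Δ, P'ᵢ = Pᵢ + Δ, and P'ₖ = Pₖ for all other k. Then P' ∈ B, ∑ₖ P'ₖ = ∑ₖ Pₖ, and η(P') > η(P). (Exchange argument used in the proof of Theorem 1.) -/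
/-- Exchange argument used in the proof of Theorem 1: moving power Δ from a
weaker-channel user n to a stronger-channel user i keeps the allocation
feasible, preserves the total power, and strictly increases the EE. -/
theorem ee_exchange_argument
    (N : ℕ) (hN : 1 ≤ N)
    (h : Fin N → ℝ) (hpos : ∀ n, 0 < h n)
    (σ2 : ℝ) (hσ2 : 0 < σ2)
    (Pf : ℝ) (hPf : 0 < Pf)
    (Pmax : Fin N → ℝ) (hPmax : ∀ n, 0 < Pmax n)
    (η : (Fin N → ℝ) → ℝ)
    (hη : ∀ P, η P = Real.logb 2 (∑ n, P n * h n + σ2) / (Pf + ∑ n, P n))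
    (P : Fin N → ℝ) (hPB : ∀ k, 0 ≤ P k ∧ P k ≤ Pmax k)
    (n i : Fin N) (hne : n ≠ i)
    (hni : h n < h i) (hPn : 0 < P n) (hPi : P i < Pmax i)
    (Δ : ℝ) (hΔpos : 0 < Δ) (hΔle : Δ ≤ min (P n) (Pmax i - P i))
    (P' : Fin N → ℝ)
    (hP' : P' = fun k => if k = n then P n - Δ else if k = i then P i + Δ else P k) :
    (∀ k, 0 ≤ P' k ∧ P' k ≤ Pmax k) ∧ (∑ k, P' k = ∑ k, P k) ∧ η P < η P' := by
  obtain ⟨hΔ1, hΔ2⟩ := le_min_iff.mp hΔle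
  subst hP'
  have key : ∀ (c : Fin N → ℝ),
      ∑ k, (if k = n then P n - Δ else if k = i then P i + Δ else P k) * c k
        = ∑ k, P k * c k + (Δ * c i - Δ * c n) := by
    intro c
    have : ∀ k, (if k = n then P n - Δ else if k = i then P i + Δ else P k) * c k
        = P k * c k + ((if k = n then -(Δ * c n) else 0) + (if k = i then Δ * c i else 0)) := by
      intro k
      by_cases hk : k = n
      · subst hk; simp [hne, sub_mul]; ring
      · by_cases hk' : k = i
        · subst hk'; simp [hk, add_mul]
        · simp [hk, hk']
    simp only [this]
    rw [Finset.sum_add_distrib, Finset.sum_add_distrib, Finset.sum_ite_eq' Finset.univ n,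
      Finset.sum_ite_eq' Finset.univ i]
    simp; ring
  have sum1 : ∑ k, (if k = n then P n - Δ else if k = i then P i + Δ else P k) = ∑ k, P k := by
    have := key (fun _ => 1)
    simpa using this
  have sum2 : ∑ k, (if k = n then P n - Δ else if k = i then P i + Δ else P k) * h k
      = ∑ k, P k * h k + (Δ * h i - Δ * h n) := key h
  have hSnonneg : 0 ≤ ∑ k, P k * h k :=
    Finset.sum_nonneg fun k _ => mul_nonneg (hPB k).1 (hpos k).le
  have hPsum : 0 ≤ ∑ k, P k := Finset.sum_nonneg fun k _ => (hPB k).1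
  refine ⟨?_, sum1, ?_⟩
  · intro k
    by_cases hk : k = n
    · subst hk; simp [hne]
      constructor
      · linarith
      · linarith [(hPB k).2, hΔpos]
    · by_cases hk' : k = i
      · subst hk'; simp [hk]
        constructor
        · linarith [(hPB k).1, hΔpos.le]
        · linarith
      · simp [hk, hk']; exact hPB k
  · rw [hη, hη, sum1, sum2]
    have hden : 0 < Pf + ∑ k, P k := by linarith
    rw [div_lt_div_iff_of_pos_right hden]
    apply Real.logb_lt_logb (by norm_num)
    · linarith
    · have : 0 < Δ * h i - Δ * h n := by
        have := hpos n
        nlinarith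
      linarith
end

section
/- Let N ≥ 1, let h, P : Fin N → ℝ with hₙ > 0 and Pₙ ≥ 0 for all n, and let σ² > 0. Then for every permutation π of Fin N, ∑ₙ log₂(1 + (P_{π(n)} h_{π(n)}) / (∑_{i > n} P_{π(i)} h_{π(i)} + σ²)) = ∑ₙ log₂(1 + (Pₙ hₙ) / (∑_{i > n} Pᵢ hᵢ + σ²)). That is, the SIC decoding order has no impact on the NOMA sum rate. -/
open Finset

lemma noma_aux (N : ℕ) (g : Fin N → ℝ) (hg : ∀ n, 0 ≤ g n)
    (σ2 : ℝ) (hσ2 : 0 < σ2) :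
    ∑ n : Fin N,
        Real.logb 2 (1 + g n /
          ((∑ i ∈ Finset.univ.filter (fun i => n < i), g i) + σ2))
      = Real.logb 2 ((∑ i, g i) + σ2) - Real.logb 2 σ2 := by
  set tail : ℕ → ℝ := fun k =>
    (∑ i ∈ Finset.univ.filter (fun i : Fin N => k ≤ (i : ℕ)), g i) + σ2 with htail
  have tail_pos : ∀ k, 0 < tail k := by
    intro k
    have : 0 ≤ ∑ i ∈ Finset.univ.filter (fun i : Fin N => k ≤ (i : ℕ)), g i :=
      Finset.sum_nonneg fun i _ => hg i
    simp only [htail]; linarith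
  have hstep : ∀ n : Fin N, tail (n : ℕ) = g n + tail ((n : ℕ) + 1) := by
    intro n
    have hset : Finset.univ.filter (fun i : Fin N => (n : ℕ) ≤ (i : ℕ))
        = insert n (Finset.univ.filter (fun i : Fin N => (n : ℕ) + 1 ≤ (i : ℕ))) := by
      ext i
      simp only [Finset.mem_filter, Finset.mem_univ, true_and, Finset.mem_insert]
      constructor
      · intro hi
        rcases eq_or_lt_of_le hi with h1 | h1
        · left; exact (Fin.ext h1.symm)
        · right; omega
      · rintro (rfl | hi) <;> omega
    have hnmem : n ∉ Finset.univ.filter (fun i : Fin N => (n : ℕ) + 1 ≤ (i : ℕ)) := by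
      simp
    simp only [htail, hset, Finset.sum_insert hnmem]
    ring
  have hfilter : ∀ n : Fin N,
      Finset.univ.filter (fun i : Fin N => n < i)
        = Finset.univ.filter (fun i : Fin N => (n : ℕ) + 1 ≤ (i : ℕ)) := by
    intro n; ext i
    simp only [Finset.mem_filter, Finset.mem_univ, true_and, Fin.lt_def]; omega
  have hterm : ∀ n : Fin N,
      Real.logb 2 (1 + g n /
          ((∑ i ∈ Finset.univ.filter (fun i => n < i), g i) + σ2))
        = Real.logb 2 (tail (n : ℕ)) - Real.logb 2 (tail ((n : ℕ) + 1)) := by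
    intro n
    have h1 : (∑ i ∈ Finset.univ.filter (fun i => n < i), g i) + σ2
        = tail ((n : ℕ) + 1) := by
      rw [hfilter n]
    rw [h1]
    have hp := tail_pos ((n : ℕ) + 1)
    have : 1 + g n / tail ((n : ℕ) + 1) = tail (n : ℕ) / tail ((n : ℕ) + 1) := by
      rw [hstep n]; field_simp; ring
    rw [this, Real.logb_div (tail_pos _).ne' hp.ne']
  rw [Finset.sum_congr rfl (fun n _ => hterm n)]
  have := Fin.sum_univ_eq_sum_range
    (fun k => Real.logb 2 (tail k) - Real.logb 2 (tail (k + 1))) N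
  rw [this, Finset.sum_range_sub' (fun k => Real.logb 2 (tail k)) N]
  have h0 : tail 0 = (∑ i, g i) + σ2 := by
    simp [htail]
  have hNt : tail N = σ2 := by
    have : Finset.univ.filter (fun i : Fin N => N ≤ (i : ℕ)) = ∅ := by
      ext i; simp
    simp [htail, this]
  rw [h0, hNt]

/-- The SIC decoding order has no impact on the NOMA sum rate: for every
permutation π of the users, the sum rate under decoding order π equals the
sum rate under the identity order. -/
theorem noma_sum_rate_order_invariant
    (N : ℕ) (hN : 1 ≤ N)
    (h P : Fin N → ℝ) (hpos : ∀ n, 0 < h n) (hPnn : ∀ n, 0 ≤ P n)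
    (σ2 : ℝ) (hσ2 : 0 < σ2) (π : Equiv.Perm (Fin N)) :
    ∑ n : Fin N,
        Real.logb 2 (1 + P (π n) * h (π n) /
          ((∑ i ∈ Finset.univ.filter (fun i => n < i), P (π i) * h (π i)) + σ2))
      = ∑ n : Fin N,
          Real.logb 2 (1 + P n * h n /
            ((∑ i ∈ Finset.univ.filter (fun i => n < i), P i * h i) + σ2)) := by
  have hg1 : ∀ n : Fin N, 0 ≤ P (π n) * h (π n) :=
    fun n => mul_nonneg (hPnn _) (hpos _).le
  have hg2 : ∀ n : Fin N, 0 ≤ P n * h n :=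
    fun n => mul_nonneg (hPnn _) (hpos _).le
  rw [noma_aux N (fun n => P (π n) * h (π n)) hg1 σ2 hσ2,
    noma_aux N (fun n => P n * h n) hg2 σ2 hσ2,
    Equiv.sum_comp π (fun i => P i * h i)]
end

section
/- Let K be a nonempty compact set in ℝᵐ, let Nu, D : ℝᵐ → ℝ be continuous with D(P) > 0 for all P ∈ K, and let β ∈ ℝ. Suppose P' ∈ K maximizes Q ↦ Nu(Q) − β·D(Q) over K and Nu(P') − β·D(P') = 0. Then β = sup_{P ∈ K} Nu(P)/D(P); i.e., a fixed point of the Dinkelbach iteration attains the maximum of the fractional objective. -/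
/-- A fixed point of the Dinkelbach iteration attains the maximum of the
fractional objective: if P' maximizes Q ↦ Nu(Q) − β·D(Q) over the compact set
K and the maximal value is 0, then β = sup_{P ∈ K} Nu(P)/D(P). -/
theorem dinkelbach_fixed_point_optimal
    (m : ℕ) (K : Set (Fin m → ℝ)) (hK : IsCompact K) (hKne : K.Nonempty)
    (Nu D : (Fin m → ℝ) → ℝ) (hNu : Continuous Nu) (hD : Continuous D)
    (hDpos : ∀ P ∈ K, 0 < D P)
    (β : ℝ) (P' : Fin m → ℝ) (hP' : P' ∈ K)
    (hmax : ∀ Q ∈ K, Nu Q - β * D Q ≤ Nu P' - β * D P')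
    (hzero : Nu P' - β * D P' = 0) :
    β = sSup ((fun P => Nu P / D P) '' K) := by
  have hub : ∀ Q ∈ K, Nu Q / D Q ≤ β := by
    intro Q hQ
    have h := (hmax Q hQ).trans_eq hzero
    rw [div_le_iff₀ (hDpos Q hQ)]
    linarith
  have hmem : Nu P' / D P' = β := by
    have := hDpos P' hP'
    field_simp
    linarith
  apply le_antisymm
  · rw [← hmem]
    exact le_csSup ⟨β, by rintro x ⟨Q, hQ, rfl⟩; exact hub Q hQ⟩ ⟨P', hP', rfl⟩
  · exact csSup_le (hKne.image _) (by rintro x ⟨Q, hQ, rfl⟩; exact hub Q hQ)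
end

section
/- Let K be a nonempty compact set in ℝᵐ, let Nu, D : ℝᵐ → ℝ be continuous with D(P) > 0 for all P ∈ K, and set β* = sup_{P ∈ K} Nu(P)/D(P) (attained since K is compact). Then max_{P ∈ K} (Nu(P) − β*·D(P)) = 0; moreover for any β ∈ ℝ, max_{P ∈ K} (Nu(P) − β·D(P)) = 0 if and only if β = β*. -/
/-- Dinkelbach's characterization of fractional programming: with
β* = sup_{P∈K} Nu(P)/D(P) on a nonempty compact set K (the supremum being
attained), the parametric problem max_{P∈K} (Nu(P) − β·D(P)) has maximal value
0 when β = β*, and for any β this maximum equals 0 if and only if β = β*. -/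
theorem dinkelbach_root_characterization
    (m : ℕ) (K : Set (Fin m → ℝ)) (hK : IsCompact K) (hKne : K.Nonempty)
    (Nu D : (Fin m → ℝ) → ℝ) (hNu : Continuous Nu) (hD : Continuous D)
    (hDpos : ∀ P ∈ K, 0 < D P)
    (βstar : ℝ) (hβstar : βstar = sSup ((fun P => Nu P / D P) '' K)) :
    IsGreatest ((fun P => Nu P - βstar * D P) '' K) 0 ∧
    (∀ β : ℝ, IsGreatest ((fun P => Nu P - β * D P) '' K) 0 ↔ β = βstar) := by
  -- the ratio function
  set f : (Fin m → ℝ) → ℝ := fun P => Nu P / D P with hf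
  have hfc : ContinuousOn f K :=
    (hNu.continuousOn.div hD.continuousOn fun P hP => (hDpos P hP).ne')
  obtain ⟨P0, hP0K, hP0max⟩ := hK.exists_isMaxOn hKne hfc
  have hgreat : IsGreatest (f '' K) (f P0) :=
    ⟨Set.mem_image_of_mem f hP0K, fun y ⟨P, hP, hPy⟩ => hPy ▸ hP0max hP⟩
  have hβeq : βstar = f P0 := by rw [hβstar, hgreat.csSup_eq]
  -- for any β: β ≥ ratio everywhere iff Nu - β D ≤ 0 everywhere
  have key : ∀ β : ℝ, ∀ P ∈ K, Nu P - β * D P ≤ 0 ↔ f P ≤ β := by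
    intro β P hP
    have hD0 := hDpos P hP
    rw [hf, div_le_iff₀ hD0, sub_nonpos]
  have hmain : IsGreatest ((fun P => Nu P - βstar * D P) '' K) 0 := by
    constructor
    · refine ⟨P0, hP0K, ?_⟩
      have hD0 := (hDpos P0 hP0K).ne'
      rw [hβeq, hf]
      field_simp
      ring
    · rintro y ⟨P, hP, rfl⟩
      exact (key βstar P hP).2 (hβeq ▸ hP0max hP)
  refine ⟨hmain, fun β => ⟨fun hβ => ?_, fun h => h ▸ hmain⟩⟩
  obtain ⟨⟨P, hP, hPeq⟩, hub⟩ := hβ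
  -- β = f P ≤ βstar, and βstar = f P0 ≤ β
  have h1 : f P ≤ β := (key β P hP).1 (le_of_eq hPeq)
  have h2 : β ≤ f P := by
    have hD0 := hDpos P hP
    have hPeq' : Nu P - β * D P = 0 := hPeq
    rw [hf, le_div_iff₀ hD0]
    linarith
  have h3 : f P0 ≤ β := (key β P0 hP0K).1 (hub ⟨P0, hP0K, rfl⟩)
  have h4 : f P ≤ f P0 := hP0max hP
  rw [hβeq]; linarith
end
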